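/- Suppose in addition that p and q are twin primes with q = p + 2. Then the 2-adic complexity of the second Ding–Helleseth sequence equals N − 1, i.e. Φ₂(s) = ⌊log₂((2^N − 1)/gcd(2^N − 1, S(2)))⌋ = N − 1. -/

import Mathlib

open Finset

/-- `ξ_N = exp(2πi/N)`, a primitive `N`-th root of unity. -/
noncomputable def DHxi (N : ℕ) : ℂ := Complex.exp (2 * Real.pi * Complex.I / N)

/-- Gauss period: `Σ_{a ∈ D} ξ_N^a`. -/
noncomputable def DHeta (N : ℕ) (D : Finset (ZMod N)) : ℂ := ∑ a ∈ D, DHxi N ^ a.val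

/-- Ding–Helleseth generalized cyclotomic class
`D₀ = {g^(2t) x^i : 0 ≤ t ≤ e/2 - 1, i ∈ {0,1}}` in `ZMod (p*q)`, where `e = (p-1)(q-1)/2`. -/
def DHD0 (p q g x : ℕ) : Finset (ZMod (p * q)) :=
  (Finset.range ((p - 1) * (q - 1) / 4) ×ˢ Finset.range 2).image
    (fun ti => (g : ZMod (p * q)) ^ (2 * ti.1) * (x : ZMod (p * q)) ^ ti.2)

/-- `D₁ = g · D₀`. -/
def DHD1 (p q g x : ℕ) : Finset (ZMod (p * q)) :=
  (DHD0 p q g x).image (fun d => (g : ZMod (p * q)) * d)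

/-- `P = {p, 2p, …, (q-1)p}` as a subset of `ZMod (p*q)`. -/
def DHP (p q : ℕ) : Finset (ZMod (p * q)) :=
  (Finset.Icc 1 (q - 1)).image (fun k => ((k * p : ℕ) : ZMod (p * q)))

/-- `Q = {q, 2q, …, (p-1)q}` as a subset of `ZMod (p*q)`. -/
def DHQ (p q : ℕ) : Finset (ZMod (p * q)) :=
  (Finset.Icc 1 (p - 1)).image (fun k => ((k * q : ℕ) : ZMod (p * q)))

/-- First Ding–Helleseth sequence: `s_i = 1` iff `i mod N ∈ D₁ ∪ P`. -/
def DHs1 (p q g x : ℕ) (i : ℕ) : ℕ :=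
  if (i : ZMod (p * q)) ∈ DHD1 p q g x ∪ DHP p q then 1 else 0

/-- Second Ding–Helleseth sequence: `s_i = 1` iff `i mod N ∈ D₁ ∪ Q`. -/
def DHs2 (p q g x : ℕ) (i : ℕ) : ℕ :=
  if (i : ZMod (p * q)) ∈ DHD1 p q g x ∪ DHQ p q then 1 else 0

/-- Circulant matrix of the first sequence: `a_{i,j} = s_{(i-j) mod N}`. -/
noncomputable def DHA1 (p q g x : ℕ) : Matrix (Fin (p * q)) (Fin (p * q)) ℂ :=
  fun i j => (DHs1 p q g x ((((i : ℕ) : ZMod (p * q)) - ((j : ℕ) : ZMod (p * q))).val) : ℂ)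

/-- Circulant matrix of the second sequence: `a_{i,j} = s_{(i-j) mod N}`. -/
noncomputable def DHA2 (p q g x : ℕ) : Matrix (Fin (p * q)) (Fin (p * q)) ℂ :=
  fun i j => (DHs2 p q g x ((((i : ℕ) : ZMod (p * q)) - ((j : ℕ) : ZMod (p * q))).val) : ℂ)

/-- `S(z) = Σ_{i=0}^{N-1} s_i z^i` for the first sequence. -/
noncomputable def DHSval1 (p q g x : ℕ) (z : ℂ) : ℂ :=
  ∑ i ∈ Finset.range (p * q), (DHs1 p q g x i : ℂ) * z ^ i

/-- `S(z) = Σ_{i=0}^{N-1} s_i z^i` for the second sequence. -/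
noncomputable def DHSval2 (p q g x : ℕ) (z : ℂ) : ℂ :=
  ∑ i ∈ Finset.range (p * q), (DHs2 p q g x i : ℂ) * z ^ i

/-- `S(2) = Σ_{i=0}^{N-1} s_i 2^i` for the first sequence, as a natural number. -/
def DHS2num1 (p q g x : ℕ) : ℕ := ∑ i ∈ Finset.range (p * q), DHs1 p q g x i * 2 ^ i

/-- `S(2) = Σ_{i=0}^{N-1} s_i 2^i` for the second sequence, as a natural number. -/
def DHS2num2 (p q g x : ℕ) : ℕ := ∑ i ∈ Finset.range (p * q), DHs2 p q g x i * 2 ^ i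

/-- Nonzero quadratic residues modulo `q`. -/
def DHQR (q : ℕ) [NeZero q] : Finset (ZMod q) :=
  Finset.univ.filter (fun a => a ≠ 0 ∧ ∃ b : ZMod q, b * b = a)

/-- Quadratic nonresidues modulo `q`. -/
def DHQNR (q : ℕ) [NeZero q] : Finset (ZMod q) :=
  Finset.univ.filter (fun a => a ≠ 0 ∧ ¬∃ b : ZMod q, b * b = a)



lemma orderOf_ne_zero' {p : ℕ} [Fact (Nat.Prime p)] {g : ZMod p} (h : orderOf g = p - 1) :
    g ≠ 0 := by
  intro h0
  have h1 := pow_orderOf_eq_one g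
  rw [h, h0, zero_pow (Nat.sub_ne_zero_of_lt (Fact.out : Nat.Prime p).one_lt)] at h1
  exact zero_ne_one h1

lemma zmod_exists_pow {p : ℕ} [Fact (Nat.Prime p)] {g y : ZMod p} (hg : orderOf g = p - 1)
    (hy : y ≠ 0) : ∃ k, k < p - 1 ∧ g ^ k = y := by
  have hp : Nat.Prime p := Fact.out
  have hg0 : g ≠ 0 := orderOf_ne_zero' hg
  set gu := (Ne.isUnit hg0).unit with hgu
  have hgval : (gu : ZMod p) = g := (Ne.isUnit hg0).unit_spec
  have hord : orderOf gu = p - 1 := by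
    rw [← orderOf_units, hgval, hg]
  have htop : Subgroup.zpowers gu = ⊤ := by
    apply Subgroup.eq_top_of_card_eq
    rw [Nat.card_zpowers, hord, Nat.card_eq_fintype_card, ZMod.card_units]
  have hyu : (Ne.isUnit hy).unit ∈ Subgroup.zpowers gu := htop ▸ Subgroup.mem_top _
  rw [← mem_powers_iff_mem_zpowers, Submonoid.mem_powers_iff] at hyu
  obtain ⟨n, hn⟩ := hyu
  refine ⟨n % (p - 1), Nat.mod_lt _ (by have := hp.one_lt; omega), ?_⟩
  have h1 : g ^ n = y := by
    have := congrArg (Units.val) hn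
    rwa [Units.val_pow_eq_pow_val, hgval, (Ne.isUnit hy).unit_spec] at this
  have h2 : gu ^ (n % (p - 1)) = gu ^ n := by
    apply pow_eq_pow_iff_modEq.mpr
    rw [hord]
    exact Nat.mod_modEq n _
  have h3 := congrArg Units.val h2
  rw [Units.val_pow_eq_pow_val, Units.val_pow_eq_pow_val, hgval] at h3
  rw [h3, h1]

lemma pow_eq_pow_of_modEq' {M₀ : Type*} [MonoidWithZero M₀] [NoZeroDivisors M₀] {g : M₀}
    (hg0 : IsUnit g) {m n : ℕ} (h : m ≡ n [MOD orderOf g]) : g ^ m = g ^ n := by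
  set u := hg0.unit with hu
  have hval : (u : M₀) = g := hg0.unit_spec
  have hord : orderOf u = orderOf g := by rw [← hval, orderOf_units]
  have h2 : u ^ m = u ^ n := pow_eq_pow_iff_modEq.mpr (by rwa [hord])
  have h3 := congrArg Units.val h2
  rwa [Units.val_pow_eq_pow_val, Units.val_pow_eq_pow_val, hval] at h3

lemma zmod_crt_inj {p q : ℕ} (hco : Nat.Coprime p q) [NeZero (p * q)] {a b : ZMod (p * q)}
    (h1 : ZMod.castHom (dvd_mul_right p q) (ZMod p) a
        = ZMod.castHom (dvd_mul_right p q) (ZMod p) b)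
    (h2 : ZMod.castHom (dvd_mul_left q p) (ZMod q) a
        = ZMod.castHom (dvd_mul_left q p) (ZMod q) b) : a = b := by
  have ea : ∀ (c : ZMod (p * q)), ZMod.castHom (dvd_mul_right p q) (ZMod p) c
      = ((c.val : ℕ) : ZMod p) := by
    intro c
    conv_lhs => rw [← ZMod.natCast_zmod_val c]
    rw [map_natCast]
  have eb : ∀ (c : ZMod (p * q)), ZMod.castHom (dvd_mul_left q p) (ZMod q) c
      = ((c.val : ℕ) : ZMod q) := by
    intro c
    conv_lhs => rw [← ZMod.natCast_zmod_val c]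
    rw [map_natCast]
  rw [ea a, ea b] at h1
  rw [eb a, eb b] at h2
  rw [ZMod.natCast_eq_natCast_iff] at h1 h2
  have : a.val ≡ b.val [MOD p * q] := (Nat.modEq_and_modEq_iff_modEq_mul hco).mp ⟨h1, h2⟩
  calc a = ((a.val : ℕ) : ZMod (p*q)) := (ZMod.natCast_zmod_val a).symm
  _ = ((b.val : ℕ) : ZMod (p*q)) := (ZMod.natCast_eq_natCast_iff _ _ _).mpr this
  _ = b := ZMod.natCast_zmod_val b

lemma isSquare_mul_iff' {q : ℕ} [Fact (Nat.Prime q)] (hq2 : q ≠ 2) {a b : ZMod q}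
    (ha : a ≠ 0) (hb : b ≠ 0) : IsSquare (a * b) ↔ (IsSquare a ↔ IsSquare b) := by
  have hab : a * b ≠ 0 := mul_ne_zero ha hb
  rw [← quadraticChar_one_iff_isSquare hab, ← quadraticChar_one_iff_isSquare ha,
    ← quadraticChar_one_iff_isSquare hb, map_mul]
  rcases quadraticChar_dichotomy ha with h | h <;>
    rcases quadraticChar_dichotomy hb with h' | h' <;>
      rw [h, h'] <;> norm_num

section struct
variable {p q g x : ℕ} [Fact (Nat.Prime p)] [Fact (Nat.Prime q)]

lemma mem_D0_iff (hpq : p < q) (hpo : Odd p) (hqo : Odd q)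
    (hgcd : Nat.gcd (p - 1) (q - 1) = 2)
    (hgp : orderOf (g : ZMod p) = p - 1) (hgq : orderOf (g : ZMod q) = q - 1)
    (hxp : (x : ZMod p) = (g : ZMod p)) (hxq : (x : ZMod q) = 1)
    (z : ZMod (p * q)) :
    z ∈ DHD0 p q g x ↔
      (ZMod.castHom (dvd_mul_right p q) (ZMod p) z ≠ 0 ∧
       ZMod.castHom (dvd_mul_left q p) (ZMod q) z ≠ 0 ∧
       IsSquare (ZMod.castHom (dvd_mul_left q p) (ZMod q) z)) := by
  have hp : Nat.Prime p := Fact.out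
  have hq : Nat.Prime q := Fact.out
  haveI : NeZero (p * q) := ⟨mul_ne_zero hp.ne_zero hq.ne_zero⟩
  set πp := ZMod.castHom (dvd_mul_right p q) (ZMod p) with hπp
  set πq := ZMod.castHom (dvd_mul_left q p) (ZMod q) with hπq
  have hgp0 : (g : ZMod p) ≠ 0 := orderOf_ne_zero' hgp
  have hgq0 : (g : ZMod q) ≠ 0 := orderOf_ne_zero' hgq
  have hp2 : p % 2 = 1 := Nat.odd_iff.mp hpo
  have hq2 : q % 2 = 1 := Nat.odd_iff.mp hqo
  have hp3 : 3 ≤ p := by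
    have := hp.two_le; omega
  have hq3 : 3 ≤ q := by
    have := hq.two_le; omega
  constructor
  · rintro hz
    simp only [DHD0, Finset.mem_image, Finset.mem_product, Finset.mem_range] at hz
    obtain ⟨⟨t, i⟩, ⟨ht, hi⟩, rfl⟩ := hz
    have e1 : πp ((g : ZMod (p * q)) ^ (2 * t) * (x : ZMod (p * q)) ^ i)
        = (g : ZMod p) ^ (2 * t) * (g : ZMod p) ^ i := by
      rw [map_mul, map_pow, map_pow, map_natCast, map_natCast, hxp]
    have e2 : πq ((g : ZMod (p * q)) ^ (2 * t) * (x : ZMod (p * q)) ^ i)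
        = (g : ZMod q) ^ (2 * t) := by
      rw [map_mul, map_pow, map_pow, map_natCast, map_natCast, hxq, one_pow, mul_one]
    refine ⟨?_, ?_, ?_⟩
    · rw [e1]
      exact mul_ne_zero (pow_ne_zero _ hgp0) (pow_ne_zero _ hgp0)
    · rw [e2]
      exact pow_ne_zero _ hgq0
    · rw [e2]
      exact ⟨(g : ZMod q) ^ t, by rw [← pow_add, two_mul]⟩
  · rintro ⟨h1, h2, h3⟩
    obtain ⟨a, ha, hga⟩ := zmod_exists_pow hgp h1
    obtain ⟨y, hy⟩ := h3
    have hy0 : y ≠ 0 := by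
      rintro rfl
      rw [mul_zero] at hy
      exact h2 hy
    obtain ⟨c, hc, hgc⟩ := zmod_exists_pow hgq hy0
    have hzq : πq z = (g : ZMod q) ^ (2 * c) := by
      rw [hy, ← hgc, ← pow_add, two_mul]
    set m1 := (p - 1) / 2 with hm1
    set m2 := (q - 1) / 2 with hm2
    have hm1e : p - 1 = 2 * m1 := by omega
    have hm2e : q - 1 = 2 * m2 := by omega
    have hm1p : 0 < m1 := by omega
    have hm2p : 0 < m2 := by omega
    have hco : Nat.Coprime m1 m2 := by
      have h := Nat.coprime_div_gcd_div_gcd (m := p - 1) (n := q - 1) (by rw [hgcd]; norm_num)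
      rwa [hgcd] at h
    set a2 := a / 2 with ha2
    set i := a % 2 with hi
    obtain ⟨t0, ht0⟩ := Nat.chineseRemainder hco a2 c
    set t := t0 % (m1 * m2) with ht
    have htlt : t < (p - 1) * (q - 1) / 4 := by
      have : (p - 1) * (q - 1) / 4 = m1 * m2 := by
        rw [hm1e, hm2e]
        have : 2 * m1 * (2 * m2) = 4 * (m1 * m2) := by ring
        rw [this, Nat.mul_div_cancel_left _ (by norm_num)]
      rw [this]
      exact Nat.mod_lt _ (Nat.mul_pos hm1p hm2p)
    have htm1 : t ≡ a2 [MOD m1] :=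
      ((Nat.mod_modEq t0 _).of_dvd (dvd_mul_right m1 m2)).symm.symm.trans ht0.1
    have htm2 : t ≡ c [MOD m2] :=
      ((Nat.mod_modEq t0 _).of_dvd (dvd_mul_left m2 m1)).trans ht0.2
    simp only [DHD0, Finset.mem_image, Finset.mem_product, Finset.mem_range]
    refine ⟨(t, i), ⟨htlt, by omega⟩, ?_⟩
    apply zmod_crt_inj ((Nat.coprime_primes hp hq).mpr (Nat.ne_of_lt hpq))
    · rw [map_mul, map_pow, map_pow, map_natCast, map_natCast, hxp, ← pow_add, ← hga]
      apply pow_eq_pow_of_modEq' (Ne.isUnit hgp0)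
      rw [hgp]
      have h2t : 2 * t ≡ 2 * a2 [MOD p - 1] := by
        rw [hm1e]
        exact htm1.mul_left' 2
      have := h2t.add_right i
      have hae : 2 * a2 + i = a := by omega
      rwa [hae] at this
    · rw [map_mul, map_pow, map_pow, map_natCast, map_natCast, hxq, one_pow, mul_one, hzq]
      apply pow_eq_pow_of_modEq' (Ne.isUnit hgq0)
      rw [hgq, hm2e]
      exact htm2.mul_left' 2

lemma g_nonsquare (hgq : orderOf (g : ZMod q) = q - 1) (hqo : Odd q) :
    ¬ IsSquare (g : ZMod q) := by
  have hq : Nat.Prime q := Fact.out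
  have hq2 : q % 2 = 1 := Nat.odd_iff.mp hqo
  have hq3 : 3 ≤ q := by have := hq.two_le; omega
  rintro ⟨y, hy⟩
  have hy0 : y ≠ 0 := by
    rintro rfl
    rw [mul_zero] at hy
    exact orderOf_ne_zero' hgq hy
  have h1 : (g : ZMod q) ^ ((q - 1) / 2) = 1 := by
    rw [hy, ← pow_two, ← pow_mul]
    have : 2 * ((q - 1) / 2) = q - 1 := by omega
    rw [this]
    exact ZMod.pow_card_sub_one_eq_one hy0
  have h2 := orderOf_dvd_of_pow_eq_one h1
  rw [hgq] at h2
  have := Nat.le_of_dvd (by omega) h2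
  omega

lemma mem_D1_iff (hpq : p < q) (hpo : Odd p) (hqo : Odd q)
    (hgcd : Nat.gcd (p - 1) (q - 1) = 2)
    (hgp : orderOf (g : ZMod p) = p - 1) (hgq : orderOf (g : ZMod q) = q - 1)
    (hxp : (x : ZMod p) = (g : ZMod p)) (hxq : (x : ZMod q) = 1)
    (z : ZMod (p * q)) :
    z ∈ DHD1 p q g x ↔
      (ZMod.castHom (dvd_mul_right p q) (ZMod p) z ≠ 0 ∧
       ZMod.castHom (dvd_mul_left q p) (ZMod q) z ≠ 0 ∧
       ¬ IsSquare (ZMod.castHom (dvd_mul_left q p) (ZMod q) z)) := by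
  have hp : Nat.Prime p := Fact.out
  have hq : Nat.Prime q := Fact.out
  haveI : NeZero (p * q) := ⟨mul_ne_zero hp.ne_zero hq.ne_zero⟩
  set πp := ZMod.castHom (dvd_mul_right p q) (ZMod p) with hπp
  set πq := ZMod.castHom (dvd_mul_left q p) (ZMod q) with hπq
  have hgp0 : (g : ZMod p) ≠ 0 := orderOf_ne_zero' hgp
  have hgq0 : (g : ZMod q) ≠ 0 := orderOf_ne_zero' hgq
  have hqne2 : q ≠ 2 := by
    have := Nat.odd_iff.mp hqo; omega
  have hgns : ¬ IsSquare (g : ZMod q) := g_nonsquare hgq hqo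
  have hgu : IsUnit (g : ZMod (p * q)) := by
    rw [ZMod.isUnit_iff_coprime]
    apply Nat.Coprime.mul_right
    · rw [Nat.coprime_comm]
      exact hp.coprime_iff_not_dvd.mpr
        (fun hdvd => hgp0 ((ZMod.natCast_eq_zero_iff g p).mpr hdvd))
    · rw [Nat.coprime_comm]
      exact hq.coprime_iff_not_dvd.mpr
        (fun hdvd => hgq0 ((ZMod.natCast_eq_zero_iff g q).mpr hdvd))
  have hπpg : πp (g : ZMod (p * q)) = (g : ZMod p) := map_natCast _ g
  have hπqg : πq (g : ZMod (p * q)) = (g : ZMod q) := map_natCast _ g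
  constructor
  · intro hz
    simp only [DHD1, Finset.mem_image] at hz
    obtain ⟨d, hd, rfl⟩ := hz
    rw [mem_D0_iff hpq hpo hqo hgcd hgp hgq hxp hxq] at hd
    obtain ⟨hd1, hd2, hd3⟩ := hd
    refine ⟨?_, ?_, ?_⟩
    · rw [map_mul, hπpg]
      exact mul_ne_zero hgp0 hd1
    · rw [map_mul, hπqg]
      exact mul_ne_zero hgq0 hd2
    · rw [map_mul, hπqg]
      intro hsq
      rw [isSquare_mul_iff' hqne2 hgq0 hd2] at hsq
      exact hgns (hsq.mpr hd3)
  · rintro ⟨h1, h2, h3⟩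
    set u := hgu.unit with hu
    have huv : (u : ZMod (p * q)) = (g : ZMod (p * q)) := hgu.unit_spec
    set d := (u⁻¹ : (ZMod (p * q))ˣ) * z with hd
    have hzd : (g : ZMod (p * q)) * d = z := by
      rw [hd, ← huv, ← mul_assoc, Units.mul_inv, one_mul]
    have hπpu : πp ((u⁻¹ : (ZMod (p * q))ˣ) : ZMod (p * q)) * (g : ZMod p) = 1 := by
      have : πp ((u⁻¹ : (ZMod (p * q))ˣ) : ZMod (p * q)) * πp (u : ZMod (p * q)) = 1 := by
        rw [← map_mul, Units.inv_mul, map_one]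
      rwa [huv, hπpg] at this
    have hπqu : πq ((u⁻¹ : (ZMod (p * q))ˣ) : ZMod (p * q)) * (g : ZMod q) = 1 := by
      have : πq ((u⁻¹ : (ZMod (p * q))ˣ) : ZMod (p * q)) * πq (u : ZMod (p * q)) = 1 := by
        rw [← map_mul, Units.inv_mul, map_one]
      rwa [huv, hπqg] at this
    have hip : πp ((u⁻¹ : (ZMod (p * q))ˣ) : ZMod (p * q)) ≠ 0 := by
      intro h0; rw [h0, zero_mul] at hπpu; exact zero_ne_one hπpu
    have hiq : πq ((u⁻¹ : (ZMod (p * q))ˣ) : ZMod (p * q)) ≠ 0 := by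
      intro h0; rw [h0, zero_mul] at hπqu; exact zero_ne_one hπqu
    have hd1 : πp d ≠ 0 := by
      rw [hd, map_mul]
      exact mul_ne_zero hip h1
    have hd2 : πq d ≠ 0 := by
      rw [hd, map_mul]
      exact mul_ne_zero hiq h2
    have hd3 : IsSquare (πq d) := by
      have hprod : πq d * (g : ZMod q) = πq z := by
        have e : πq d * (g : ZMod q)
            = (πq ((u⁻¹ : (ZMod (p * q))ˣ) : ZMod (p * q)) * (g : ZMod q)) * πq z := by
          rw [hd, map_mul]; ring
        rw [e, hπqu, one_mul]
      have hiff := isSquare_mul_iff' hqne2 hd2 hgq0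
      rw [hprod] at hiff
      by_contra hns
      exact h3 (hiff.mpr (iff_of_false hns hgns))
    simp only [DHD1, Finset.mem_image]
    exact ⟨d, (mem_D0_iff hpq hpo hqo hgcd hgp hgq hxp hxq d).mpr ⟨hd1, hd2, hd3⟩, hzd⟩

lemma mem_Q_iff (hpq : p < q) (z : ZMod (p * q)) :
    z ∈ DHQ p q ↔
      (ZMod.castHom (dvd_mul_right p q) (ZMod p) z ≠ 0 ∧
       ZMod.castHom (dvd_mul_left q p) (ZMod q) z = 0) := by
  have hp : Nat.Prime p := Fact.out
  have hq : Nat.Prime q := Fact.out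
  haveI : NeZero (p * q) := ⟨mul_ne_zero hp.ne_zero hq.ne_zero⟩
  set πp := ZMod.castHom (dvd_mul_right p q) (ZMod p) with hπp
  set πq := ZMod.castHom (dvd_mul_left q p) (ZMod q) with hπq
  have hpndvdq : ¬ p ∣ q := by
    intro hdvd
    rcases (Nat.Prime.eq_one_or_self_of_dvd hq p hdvd) with h | h
    · exact hp.one_lt.ne' h
    · omega
  constructor
  · intro hz
    simp only [DHQ, Finset.mem_image, Finset.mem_Icc] at hz
    obtain ⟨k, ⟨hk1, hk2⟩, rfl⟩ := hz
    constructor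
    · rw [map_natCast]
      intro h0
      have hdvd := (ZMod.natCast_eq_zero_iff _ p).mp h0
      rcases (Nat.Prime.dvd_mul hp).mp hdvd with h | h
      · have := Nat.le_of_dvd (by omega) h
        have := hp.two_le
        omega
      · exact hpndvdq h
    · rw [map_natCast]
      apply (ZMod.natCast_eq_zero_iff _ q).mpr
      exact dvd_mul_left q k
  · rintro ⟨h1, h2⟩
    have hzval : πq ((z.val : ℕ) : ZMod (p * q)) = ((z.val : ℕ) : ZMod q) := map_natCast _ _
    rw [← ZMod.natCast_zmod_val z] at h2
    rw [hzval] at h2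
    have hdvd := (ZMod.natCast_eq_zero_iff _ q).mp h2
    obtain ⟨k, hk⟩ := hdvd
    have hzlt : z.val < p * q := ZMod.val_lt z
    have hklt : k < p := by
      by_contra hge
      push_neg at hge
      have : p * q ≤ q * k := by
        rw [mul_comm p q]; exact Nat.mul_le_mul_left q hge
      omega
    have hk0 : k ≠ 0 := by
      rintro rfl
      rw [mul_zero] at hk
      apply h1
      rw [← ZMod.natCast_zmod_val z, hk]
      simp
    simp only [DHQ, Finset.mem_image, Finset.mem_Icc]
    refine ⟨k, ⟨by omega, by omega⟩, ?_⟩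
    rw [← ZMod.natCast_zmod_val z, hk]
    exact congrArg Nat.cast (mul_comm k q)

end struct

lemma sum_range_mul_split {M : Type*} [AddCommMonoid M] (a b : ℕ) (f : ℕ → M) :
    ∑ i ∈ Finset.range (a * b), f i
      = ∑ v ∈ Finset.range a, ∑ k ∈ Finset.range b, f (v + a * k) := by
  rcases Nat.eq_zero_or_pos a with rfl | ha
  · simp
  rw [← Finset.sum_product']
  apply Finset.sum_nbij' (fun i => (i % a, i / a)) (fun x => x.1 + a * x.2)
  · intro i hi
    simp only [Finset.mem_range] at hi
    simp only [Finset.mem_product, Finset.mem_range]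
    exact ⟨Nat.mod_lt _ ha, Nat.div_lt_of_lt_mul hi⟩
  · intro x hx
    simp only [Finset.mem_product, Finset.mem_range] at hx
    simp only [Finset.mem_range]
    calc x.1 + a * x.2 < a + a * x.2 := by omega
    _ = a * (x.2 + 1) := by ring
    _ ≤ a * b := Nat.mul_le_mul_left _ hx.2
  · intro i hi; simp [Nat.mod_add_div]
  · intro x hx
    simp only [Finset.mem_product, Finset.mem_range] at hx
    simp [Nat.add_mul_mod_self_left, Nat.mod_eq_of_lt hx.1, Nat.add_mul_div_left _ _ ha,
      Nat.div_eq_of_lt hx.1]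
  · intro i hi; simp [Nat.mod_add_div]


lemma sum_range_zmod {q : ℕ} [NeZero q] {M : Type*} [AddCommMonoid M] (G : ZMod q → M) :
    ∑ v ∈ Finset.range q, G ((v : ℕ) : ZMod q) = ∑ u : ZMod q, G u := by
  apply Finset.sum_nbij' (fun v : ℕ => ((v : ℕ) : ZMod q)) (fun u : ZMod q => u.val)
  · intro v _; exact Finset.mem_univ _
  · intro u _; exact Finset.mem_range.mpr (ZMod.val_lt u)
  · intro v hv; exact ZMod.val_natCast_of_lt (Finset.mem_range.mp hv)
  · intro u _; exact ZMod.natCast_zmod_val u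
  · intro v _; rfl
lemma zmod_sum_pow_val {q r : ℕ} [NeZero q] (β : ZMod r) :
    ∑ v : ZMod q, β ^ v.val = ∑ i ∈ Finset.range q, β ^ i := by
  apply Finset.sum_nbij' (fun v : ZMod q => v.val) (fun i : ℕ => (i : ZMod q))
  · intro v _; exact Finset.mem_range.mpr (ZMod.val_lt v)
  · intro i _; exact Finset.mem_univ _
  · intro v _; exact ZMod.natCast_zmod_val v
  · intro i hi; exact ZMod.val_natCast_of_lt (Finset.mem_range.mp hi)
  · intro v _; rfl

lemma gauss_eta_ne {q r : ℕ} [Fact (Nat.Prime q)] [Fact (Nat.Prime r)] (hq2 : q ≠ 2) (hr2 : r ≠ 2)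
    {β : ZMod r} (hβ : orderOf β = q)
    (hq1 : (q : ZMod r) ≠ 1) (hqm1 : (q : ZMod r) ≠ -1) :
    (1 + ∑ v ∈ DHQR q, β ^ v.val ≠ 0) ∧ (1 + ∑ v ∈ DHQNR q, β ^ v.val ≠ 0) := by
  have hq : Nat.Prime q := Fact.out
  have hr : Nat.Prime r := Fact.out
  haveI : Fact (2 < r) := ⟨lt_of_le_of_ne hr.two_le (Ne.symm hr2)⟩
  have hβ1 : β ^ q = 1 := hβ ▸ pow_orderOf_eq_one β
  have hβne1 : β ≠ 1 := by
    intro h; rw [h, orderOf_one] at hβ; exact hq.one_lt.ne hβ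
  -- additive character
  set ψ : AddChar (ZMod q) (ZMod r) := AddChar.zmodChar q hβ1 with hψdef
  have hψprim : ψ.IsPrimitive := by
    have h := IsPrimitiveRoot.orderOf β
    rw [hβ] at h
    exact AddChar.zmodChar_primitive_of_primitive_root q h
  -- multiplicative character
  set χ : MulChar (ZMod q) (ZMod r) :=
    (quadraticChar (ZMod q)).ringHomComp (Int.castRingHom (ZMod r)) with hχdef
  have hrchar : ringChar (ZMod q) ≠ 2 := by rw [ZMod.ringChar_zmod_n]; exact hq2
  have hχ₂ : χ.IsQuadratic := (quadraticChar_isQuadratic (ZMod q)).comp _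
  have hχ₁ : χ ≠ 1 := by
    obtain ⟨b, hb⟩ := FiniteField.exists_nonsquare hrchar
    have hb0 : b ≠ 0 := by rintro rfl; exact hb ⟨0, by ring⟩
    intro h
    have h1 : χ b = 1 := by rw [h]; exact MulChar.one_apply (Ne.isUnit hb0)
    have h2 : χ b = -1 := by
      rw [hχdef]
      show ((quadraticChar (ZMod q) b : ℤ) : ZMod r) = -1
      rw [quadraticChar_neg_one_iff_not_isSquare.mpr hb]; push_cast; ring
    rw [h2] at h1
    exact ZMod.neg_one_ne_one h1
  have hsq := gaussSum_sq hχ₁ hχ₂ hψprim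
  set η₀ := ∑ v ∈ DHQR q, β ^ v.val with hη₀
  set η₁ := ∑ v ∈ DHQNR q, β ^ v.val with hη₁
  -- sum over all of ZMod q is 0
  have sum_univ : ∑ v : ZMod q, β ^ v.val = 0 := by
    rw [zmod_sum_pow_val]
    have := geom_sum_mul β q
    rw [hβ1, sub_self] at this
    rcases mul_eq_zero.mp this with h | h
    · exact h
    · exact absurd (sub_eq_zero.mp h) hβne1
  -- η₀ + η₁ = -1
  have key1 : η₀ + η₁ = -1 := by
    have hdisj : Disjoint (DHQR q) (DHQNR q) := by
      rw [Finset.disjoint_left]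
      intro a ha hb
      simp only [DHQR, DHQNR, Finset.mem_filter] at ha hb
      exact hb.2.2 ha.2.2
    have hunion : DHQR q ∪ DHQNR q = Finset.univ.erase (0 : ZMod q) := by
      ext a
      simp only [DHQR, DHQNR, Finset.mem_union, Finset.mem_filter, Finset.mem_erase,
        Finset.mem_univ, and_true, true_and]
      tauto
    have h0 : β ^ (0 : ZMod q).val + ∑ v ∈ Finset.univ.erase (0 : ZMod q), β ^ v.val
        = ∑ v : ZMod q, β ^ v.val :=
      Finset.add_sum_erase Finset.univ (fun v : ZMod q => β ^ v.val) (Finset.mem_univ 0)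
    rw [hη₀, hη₁, ← Finset.sum_union hdisj, hunion]
    rw [sum_univ, ZMod.val_zero, pow_zero] at h0
    linear_combination h0
  -- η₀ - η₁ = gaussSum
  have key2 : η₀ - η₁ = gaussSum χ ψ := by
    have hpt : ∀ v : ZMod q,
        (if v ∈ DHQR q then β ^ v.val else 0) - (if v ∈ DHQNR q then β ^ v.val else 0)
          = χ v * ψ v := by
      intro v
      have hψv : ψ v = β ^ v.val := AddChar.zmodChar_apply hβ1 v
      by_cases hv0 : v = 0
      · subst hv0
        have : χ (0 : ZMod q) = 0 := MulChar.map_nonunit χ not_isUnit_zero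
        simp [DHQR, DHQNR, this]
      · by_cases hvs : IsSquare v
        · have h1 : χ v = 1 := by
            show ((quadraticChar (ZMod q) v : ℤ) : ZMod r) = 1
            rw [(quadraticChar_one_iff_isSquare hv0).mpr hvs]; push_cast; ring
          obtain ⟨b, hb⟩ := hvs
          have hmem : v ∈ DHQR q := by
            simp only [DHQR, Finset.mem_filter, Finset.mem_univ, true_and]
            exact ⟨hv0, b, hb.symm⟩
          have hmem' : v ∉ DHQNR q := by
            simp only [DHQNR, Finset.mem_filter, Finset.mem_univ, true_and, not_and, not_not]
            exact fun _ => ⟨b, hb.symm⟩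
          rw [if_pos hmem, if_neg hmem', h1, hψv]; ring
        · have h1 : χ v = -1 := by
            show ((quadraticChar (ZMod q) v : ℤ) : ZMod r) = -1
            rw [quadraticChar_neg_one_iff_not_isSquare.mpr hvs]; push_cast; ring
          have hmem : v ∉ DHQR q := by
            simp only [DHQR, Finset.mem_filter, Finset.mem_univ, true_and, not_and]
            rintro - ⟨b, hb⟩
            exact hvs ⟨b, hb.symm⟩
          have hmem' : v ∈ DHQNR q := by
            simp only [DHQNR, Finset.mem_filter, Finset.mem_univ, true_and]
            exact ⟨hv0, fun ⟨b, hb⟩ => hvs ⟨b, hb.symm⟩⟩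
          rw [if_neg hmem, if_pos hmem', h1, hψv]; ring
    have : gaussSum χ ψ = ∑ v : ZMod q,
        ((if v ∈ DHQR q then β ^ v.val else 0) - (if v ∈ DHQNR q then β ^ v.val else 0)) :=
      (Finset.sum_congr rfl (fun v _ => (hpt v).symm))
    rw [this, Finset.sum_sub_distrib, Finset.sum_ite_mem, Finset.sum_ite_mem,
      Finset.univ_inter, Finset.univ_inter, hη₀, hη₁]
  -- the square identity
  have hcard : (Fintype.card (ZMod q) : ZMod r) = (q : ZMod r) := by rw [ZMod.card]
  have hsq' : (η₀ - η₁) ^ 2 = χ (-1) * (q : ZMod r) := by rw [key2, hsq, hcard]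
  have final : (η₀ - η₁ = 1 ∨ η₀ - η₁ = -1) → False := by
    intro hv
    have hone : χ (-1) * (q : ZMod r) = 1 := by
      rcases hv with h | h <;> rw [h] at hsq' <;> linear_combination -hsq'
    rcases hχ₂ (-1) with h | h | h <;> rw [h] at hone
    · simp at hone
    · rw [one_mul] at hone; exact hq1 hone
    · exact hqm1 (by linear_combination -hone)
  refine ⟨fun hc => final ?_, fun hc => final ?_⟩
  · right
    have h1 : η₁ = 0 := by linear_combination key1 - hc
    linear_combination hc - h1
  · left
    have h1 : η₀ = 0 := by linear_combination key1 - hc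
    linear_combination h1 - hc

section main
variable {p q g x : ℕ} [Fact (Nat.Prime p)] [Fact (Nat.Prime q)]

lemma DHs2_eq (hpq : p < q) (hpo : Odd p) (hqo : Odd q)
    (hgcd : Nat.gcd (p - 1) (q - 1) = 2)
    (hgp : orderOf (g : ZMod p) = p - 1) (hgq : orderOf (g : ZMod q) = q - 1)
    (hxp : (x : ZMod p) = (g : ZMod p)) (hxq : (x : ZMod q) = 1) (i : ℕ) :
    DHs2 p q g x i = if ((i : ZMod p) ≠ 0 ∧ ((i : ZMod q) = 0 ∨ ¬ ∃ b : ZMod q, b * b = (i : ZMod q))) then 1 else 0 := by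
  unfold DHs2
  apply if_congr _ rfl rfl
  have e1 : ZMod.castHom (dvd_mul_right p q) (ZMod p) ((i : ℕ) : ZMod (p * q)) = (i : ZMod p) :=
    map_natCast _ i
  have e2 : ZMod.castHom (dvd_mul_left q p) (ZMod q) ((i : ℕ) : ZMod (p * q)) = (i : ZMod q) :=
    map_natCast _ i
  rw [Finset.mem_union, mem_D1_iff hpq hpo hqo hgcd hgp hgq hxp hxq,
    mem_Q_iff hpq, e1, e2]
  have hiff : IsSquare ((i : ZMod q)) ↔ ∃ b : ZMod q, b * b = (i : ZMod q) :=
    ⟨fun ⟨b, hb⟩ => ⟨b, hb.symm⟩, fun ⟨b, hb⟩ => ⟨b, hb.symm⟩⟩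
  rw [hiff]
  tauto

lemma dh_main (r : ℕ) (hpo : Odd p) (hqo : Odd q) (hpq : p < q)
    (hgcd : Nat.gcd (p - 1) (q - 1) = 2)
    (hgp : orderOf (g : ZMod p) = p - 1) (hgq : orderOf (g : ZMod q) = q - 1)
    (hxp : (x : ZMod p) = (g : ZMod p)) (hxq : (x : ZMod q) = 1) (htwin : q = p + 2)
    (hr : Nat.Prime r) (hr1 : r ∣ 2 ^ (p * q) - 1) (hr2 : r ∣ DHS2num2 p q g x) : False := by
  classical
  haveI : Fact (Nat.Prime r) := ⟨hr⟩
  have hp : Nat.Prime p := Fact.out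
  have hq : Nat.Prime q := Fact.out
  have hp2 : p % 2 = 1 := Nat.odd_iff.mp hpo
  have hp3 : 3 ≤ p := by have := hp.two_le; omega
  have hq5 : 5 ≤ q := by omega
  have hqne2 : q ≠ 2 := by omega
  have hN0 : 0 < p * q := Nat.mul_pos (by omega) (by omega)
  have h2N : 1 ≤ 2 ^ (p * q) := Nat.one_le_two_pow
  have hrne2 : r ≠ 2 := by
    rintro rfl
    have h2 : (2 : ℕ) ∣ 2 ^ (p * q) := dvd_pow_self 2 (by omega)
    omega
  have hrodd : r % 2 = 1 := Nat.odd_iff.mp (hr.odd_of_ne_two hrne2)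
  have hr3 : 3 ≤ r := by have := hr.two_le; omega
  have h2r0 : (2 : ZMod r) ≠ 0 := by
    intro h
    have h' : ((2 : ℕ) : ZMod r) = 0 := by push_cast; exact h
    have := Nat.le_of_dvd (by norm_num) ((ZMod.natCast_eq_zero_iff 2 r).mp h')
    omega
  have h2pow : (2 : ZMod r) ^ (p * q) = 1 := by
    have h0 : ((2 ^ (p * q) - 1 : ℕ) : ZMod r) = 0 :=
      (ZMod.natCast_eq_zero_iff _ r).mpr hr1
    have he : ((2 ^ (p * q) - 1 : ℕ) : ZMod r) = (2 : ZMod r) ^ (p * q) - 1 := by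
      push_cast [h2N]
      ring
    rw [he] at h0
    linear_combination h0
  set dd := orderOf (2 : ZMod r) with hdd
  have hddvd : dd ∣ p * q := orderOf_dvd_of_pow_eq_one h2pow
  have hdr : dd ∣ r - 1 := orderOf_dvd_of_pow_eq_one (ZMod.pow_card_sub_one_eq_one h2r0)
  have hdne1 : dd ≠ 1 := by
    intro h
    have h21 : (2 : ZMod r) = 1 := orderOf_eq_one_iff.mp h
    have h' : ((1 : ℕ) : ZMod r) = 0 := by push_cast; linear_combination h21
    have := Nat.le_of_dvd one_pos ((ZMod.natCast_eq_zero_iff 1 r).mp h')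
    omega
  have h2dvd : (2 : ℕ) ∣ r - 1 := by omega
  have hco2 : ∀ m : ℕ, m % 2 = 1 → Nat.Coprime 2 m := by
    intro m hm
    exact (Nat.prime_two.coprime_iff_not_dvd).mpr (by omega)
  -- the q-side condition
  set hfun : ZMod q → Prop := fun v => (v = 0 ∨ ¬ ∃ b : ZMod q, b * b = v) with hhfun
  have hq0r : (p : ZMod q) ≠ 0 := by
    intro h
    have := Nat.le_of_dvd (by omega) ((ZMod.natCast_eq_zero_iff p q).mp h)
    omega
  have hpnz : ∀ t : ℕ, t < p → t ≠ 0 → ((t : ℕ) : ZMod p) ≠ 0 := by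
    intro t h1 h2 h
    have := Nat.le_of_dvd (by omega) ((ZMod.natCast_eq_zero_iff t p).mp h)
    omega
  -- expand the sum
  have hS0 : ((DHS2num2 p q g x : ℕ) : ZMod r) = 0 :=
    (ZMod.natCast_eq_zero_iff _ r).mpr hr2
  have hSsum : ((DHS2num2 p q g x : ℕ) : ZMod r)
      = ∑ i ∈ Finset.range (p * q),
          (if ((i : ZMod p) ≠ 0 ∧ hfun ((i : ZMod q))) then (1 : ZMod r) else 0) * 2 ^ i := by
    unfold DHS2num2
    push_cast
    apply Finset.sum_congr rfl
    intro i _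
    congr 1
    rw [DHs2_eq hpq hpo hqo hgcd hgp hgq hxp hxq i]
    split_ifs with h1 h2 h3 <;> first | rfl | simp_all [hhfun]
  have hsplit : ∀ i : ℕ, (if ((i : ZMod p) ≠ 0 ∧ hfun ((i : ZMod q))) then (1 : ZMod r) else 0)
      = (if hfun ((i : ZMod q)) then (1 : ZMod r) else 0)
        - (if ((i : ZMod p) = 0 ∧ hfun ((i : ZMod q))) then (1 : ZMod r) else 0) := by
    intro i
    by_cases h1 : (i : ZMod p) = 0 <;> by_cases h2 : hfun ((i : ZMod q)) <;> simp [h1, h2]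
  rw [Finset.sum_congr rfl (fun i _ => by rw [hsplit i, sub_mul]),
    Finset.sum_sub_distrib] at hSsum
  set E := ∑ k ∈ Finset.range p, ((2 : ZMod r) ^ q) ^ k with hE
  set H := ∑ v ∈ Finset.range q, (if hfun ((v : ZMod q)) then (1 : ZMod r) else 0) * 2 ^ v with hH
  set B := ∑ j ∈ Finset.range q,
      (if hfun ((p : ZMod q) * ((j : ℕ) : ZMod q)) then (1 : ZMod r) else 0)
        * ((2 : ZMod r) ^ p) ^ j with hB
  have hA : ∑ i ∈ Finset.range (p * q), (if hfun ((i : ZMod q)) then (1 : ZMod r) else 0) * 2 ^ i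
      = H * E := by
    rw [show p * q = q * p from mul_comm p q, sum_range_mul_split q p, hH, hE, Finset.sum_mul]
    apply Finset.sum_congr rfl
    intro v _
    rw [Finset.mul_sum]
    apply Finset.sum_congr rfl
    intro k _
    have hc : ((v + q * k : ℕ) : ZMod q) = ((v : ℕ) : ZMod q) := by
      push_cast [ZMod.natCast_self]
      ring
    rw [hc, pow_add, pow_mul]
    ring
  have hBeq : ∑ i ∈ Finset.range (p * q),
      (if ((i : ZMod p) = 0 ∧ hfun ((i : ZMod q))) then (1 : ZMod r) else 0) * 2 ^ i = B := by
    rw [sum_range_mul_split p q]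
    rw [Finset.sum_eq_single_of_mem 0 (Finset.mem_range.mpr (by omega))]
    · rw [hB]
      apply Finset.sum_congr rfl
      intro j _
      have h0 : ((0 + p * j : ℕ) : ZMod p) = 0 := by
        push_cast [ZMod.natCast_self]
        ring
      have hcq : ((0 + p * j : ℕ) : ZMod q) = (p : ZMod q) * ((j : ℕ) : ZMod q) := by
        push_cast
        ring
      rw [hcq]
      rw [if_congr (and_iff_right h0) rfl rfl, zero_add, pow_mul]
    · intro t ht ht0
      apply Finset.sum_eq_zero
      intro j _
      have hnz : ((t + p * j : ℕ) : ZMod p) ≠ 0 := by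
        have : ((t + p * j : ℕ) : ZMod p) = ((t : ℕ) : ZMod p) := by
          push_cast [ZMod.natCast_self]
          ring
        rw [this]
        exact hpnz t (Finset.mem_range.mp ht) ht0
      rw [if_neg (fun hh => hnz hh.1), zero_mul]
  rw [hA, hBeq, hS0] at hSsum
  have hmain : H * E - B = 0 := hSsum.symm
  have hEzero : (2 : ZMod r) ^ q ≠ 1 → E = 0 := by
    intro hne
    have hgeom : E * ((2 : ZMod r) ^ q - 1) = ((2 : ZMod r) ^ q) ^ p - 1 := geom_sum_mul _ p
    rw [← pow_mul, mul_comm q p, h2pow, sub_self] at hgeom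
    rcases mul_eq_zero.mp hgeom with h | h
    · exact h
    · exact absurd (show (2 : ZMod r) ^ q = 1 by linear_combination h) hne
  -- Case dd = p
  have case_p : dd = p → False := by
    intro hcase
    have h2p1 : (2 : ZMod r) ^ p = 1 := by
      rw [← hcase]; exact pow_orderOf_eq_one _
    have h2q1 : (2 : ZMod r) ^ q ≠ 1 := by
      intro h
      have hdv := orderOf_dvd_of_pow_eq_one h
      rw [← hdd, hcase] at hdv
      rcases hq.eq_one_or_self_of_dvd _ hdv with h' | h' <;> omega
    have hB0 : B = 0 := by
      have hh := hmain
      rw [hEzero h2q1, mul_zero] at hh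
      linear_combination -hh
    have hBcount : B = (((Finset.range q).filter
        (fun j => hfun ((p : ZMod q) * ((j : ℕ) : ZMod q)))).card : ZMod r) := by
      rw [hB, Finset.sum_congr rfl (fun j _ => by rw [h2p1, one_pow, mul_one]),
        Finset.sum_boole]
    rw [hBcount] at hB0
    have hdvd := (ZMod.natCast_eq_zero_iff _ r).mp hB0
    have h0mem : (0 : ℕ) ∈ (Finset.range q).filter
        (fun j => hfun ((p : ZMod q) * ((j : ℕ) : ZMod q))) := by
      refine Finset.mem_filter.mpr ⟨Finset.mem_range.mpr (by omega), Or.inl ?_⟩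
      push_cast
      ring
    have hcard1 : 0 < ((Finset.range q).filter
        (fun j => hfun ((p : ZMod q) * ((j : ℕ) : ZMod q)))).card :=
      Finset.card_pos.mpr ⟨0, h0mem⟩
    have hcardq : ((Finset.range q).filter
        (fun j => hfun ((p : ZMod q) * ((j : ℕ) : ZMod q)))).card ≤ q :=
      (Finset.card_filter_le _ _).trans (le_of_eq (Finset.card_range q))
    have hple : 2 * p ∣ r - 1 :=
      Nat.Coprime.mul_dvd_of_dvd_of_dvd (hco2 p hp2) h2dvd (hcase ▸ hdr)
    have hle1 := Nat.le_of_dvd (by omega) hple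
    have hle2 := Nat.le_of_dvd hcard1 hdvd
    omega
  -- Case dd = q
  have case_q : dd = q → False := by
    intro hcase
    have h2q1 : (2 : ZMod r) ^ q = 1 := by rw [← hcase]; exact pow_orderOf_eq_one _
    have hrge : 2 * q ∣ r - 1 :=
      Nat.Coprime.mul_dvd_of_dvd_of_dvd (hco2 q (Nat.odd_iff.mp hqo)) h2dvd (hcase ▸ hdr)
    have hrge' : 2 * q ≤ r - 1 := Nat.le_of_dvd (by omega) hrge
    have hEp : E = (p : ZMod r) := by
      rw [hE, Finset.sum_congr rfl (fun k _ => by rw [h2q1, one_pow]), Finset.sum_const,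
        Finset.card_range, nsmul_eq_mul, mul_one]
    have hHu : H = ∑ u : ZMod q, (if hfun u then (1 : ZMod r) else 0) * 2 ^ u.val := by
      rw [hH, ← sum_range_zmod (fun u : ZMod q => (if hfun u then (1 : ZMod r) else 0) * 2 ^ u.val)]
      apply Finset.sum_congr rfl
      intro v hv
      rw [ZMod.val_natCast_of_lt (Finset.mem_range.mp hv)]
    have hBu : B = ∑ u : ZMod q,
        (if hfun ((p : ZMod q) * u) then (1 : ZMod r) else 0) * 2 ^ ((p : ZMod q) * u).val := by
      rw [hB, ← sum_range_zmod (fun u : ZMod q =>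
        (if hfun ((p : ZMod q) * u) then (1 : ZMod r) else 0) * 2 ^ ((p : ZMod q) * u).val)]
      apply Finset.sum_congr rfl
      intro j hj
      congr 1
      rw [← pow_mul, pow_eq_pow_mod (p * j) h2q1]
      congr 1
      have he : (p : ZMod q) * ((j : ℕ) : ZMod q) = ((p * j : ℕ) : ZMod q) := by push_cast; ring
      rw [he, ZMod.val_natCast]
    have hBH : B = H := by
      rw [hBu, hHu]
      exact Fintype.sum_bijective (fun u : ZMod q => (p : ZMod q) * u)
        (Equiv.mulLeft₀ (p : ZMod q) hq0r).bijective _ _ (fun u => rfl)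
    have hHzero : H = 0 := by
      have h1 : H * ((p : ZMod r) - 1) = 0 := by
        rw [hEp, hBH] at hmain
        linear_combination hmain
      rcases mul_eq_zero.mp h1 with h | h
      · exact h
      · exfalso
        have hc : ((p - 1 : ℕ) : ZMod r) = 0 := by
          push_cast [Nat.cast_sub (show 1 ≤ p by omega)]
          linear_combination h
        have := Nat.le_of_dvd (by omega) ((ZMod.natCast_eq_zero_iff _ r).mp hc)
        omega
    have hHeta : H = 1 + ∑ v ∈ DHQNR q, (2 : ZMod r) ^ v.val := by
      have step1 : (∑ u : ZMod q, (if hfun u then (1 : ZMod r) else 0) * 2 ^ u.val)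
          = ∑ u ∈ Finset.univ.filter hfun, (2 : ZMod r) ^ u.val := by
        rw [Finset.sum_filter]
        exact Finset.sum_congr rfl (fun u _ => by split_ifs <;> simp)
      rw [hHu, step1]
      have hfin : Finset.univ.filter hfun = insert (0 : ZMod q) (DHQNR q) := by
        ext a
        simp only [Finset.mem_filter, Finset.mem_univ, true_and, Finset.mem_insert, DHQNR, hhfun]
        by_cases h : a = 0 <;> simp [h]
      rw [hfin, Finset.sum_insert (by simp [DHQNR]), ZMod.val_zero, pow_zero]
    have hq1 : (q : ZMod r) ≠ 1 := by
      intro h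
      have hc : ((q - 1 : ℕ) : ZMod r) = 0 := by
        push_cast [Nat.cast_sub (show 1 ≤ q by omega)]
        linear_combination h
      have := Nat.le_of_dvd (by omega) ((ZMod.natCast_eq_zero_iff _ r).mp hc)
      omega
    have hqm1 : (q : ZMod r) ≠ -1 := by
      intro h
      have hc : ((q + 1 : ℕ) : ZMod r) = 0 := by push_cast; linear_combination h
      have := Nat.le_of_dvd (by omega) ((ZMod.natCast_eq_zero_iff _ r).mp hc)
      omega
    have hord2 : orderOf (2 : ZMod r) = q := by rw [← hdd]; exact hcase
    exact (gauss_eta_ne hqne2 hrne2 hord2 hq1 hqm1).2 (hHeta ▸ hHzero)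
  -- Case dd = p * q
  have case_pq : dd = p * q → False := by
    intro hcase
    have h3q : 3 * q ≤ p * q := Nat.mul_le_mul_right q (by omega)
    have hrge' : p * q ≤ r - 1 := Nat.le_of_dvd (by omega) (hcase ▸ hdr)
    have h2q1 : (2 : ZMod r) ^ q ≠ 1 := by
      intro h
      have hdv := orderOf_dvd_of_pow_eq_one h
      rw [← hdd, hcase] at hdv
      have := Nat.le_of_dvd (by omega) hdv
      omega
    have hB0 : B = 0 := by
      have hh := hmain
      rw [hEzero h2q1, mul_zero] at hh
      linear_combination -hh
    set γ := (2 : ZMod r) ^ p with hγ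
    have hγord : orderOf γ = q := by
      rw [hγ, orderOf_pow' _ (show p ≠ 0 by omega), ← hdd, hcase]
      have hgcd' : Nat.gcd (p * q) p = p := by
        rw [Nat.gcd_comm]
        exact Nat.gcd_eq_left (dvd_mul_right p q)
      rw [hgcd', Nat.mul_div_cancel_left q (by omega : 0 < p)]
    have hBu : B = ∑ u : ZMod q,
        (if hfun ((p : ZMod q) * u) then (1 : ZMod r) else 0) * γ ^ u.val := by
      rw [hB, ← sum_range_zmod (fun u : ZMod q =>
        (if hfun ((p : ZMod q) * u) then (1 : ZMod r) else 0) * γ ^ u.val)]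
      apply Finset.sum_congr rfl
      intro j hj
      rw [ZMod.val_natCast_of_lt (Finset.mem_range.mp hj)]
    have hsq_iff : ∀ u : ZMod q, u ≠ 0 →
        ((∃ b : ZMod q, b * b = (p : ZMod q) * u) ↔ (IsSquare ((p : ZMod q)) ↔ IsSquare u)) := by
      intro u hu
      rw [show (∃ b : ZMod q, b * b = (p : ZMod q) * u) ↔ IsSquare ((p : ZMod q) * u) from
        ⟨fun ⟨b, hb⟩ => ⟨b, hb.symm⟩, fun ⟨b, hb⟩ => ⟨b, hb.symm⟩⟩]
      exact isSquare_mul_iff' hqne2 hq0r hu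
    have hfilter : Finset.univ.filter (fun u : ZMod q => hfun ((p : ZMod q) * u))
        = insert (0 : ZMod q) (if IsSquare ((p : ZMod q)) then DHQNR q else DHQR q) := by
      ext u
      by_cases hu : u = 0
      · subst hu
        simp [hhfun]
      · have hpu : (p : ZMod q) * u ≠ 0 := mul_ne_zero hq0r hu
        simp only [Finset.mem_filter, Finset.mem_univ, true_and, Finset.mem_insert, hhfun]
        have hl := hsq_iff u hu
        have hru : (∃ b : ZMod q, b * b = u) ↔ IsSquare u :=
          ⟨fun ⟨b, hb⟩ => ⟨b, hb.symm⟩, fun ⟨b, hb⟩ => ⟨b, hb.symm⟩⟩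
        by_cases hps : IsSquare ((p : ZMod q))
        · rw [if_pos hps]
          simp only [DHQNR, Finset.mem_filter, Finset.mem_univ, true_and]
          constructor
          · rintro (h | h)
            · exact absurd h hpu
            · exact Or.inr ⟨hu, fun hex => h (hl.mpr (iff_of_true hps (hru.mp hex)))⟩
          · rintro (h | ⟨h1, h2⟩)
            · exact absurd h hu
            · exact Or.inr (fun hex => h2 (hru.mpr ((hl.mp hex).mp hps)))
        · rw [if_neg hps]
          simp only [DHQR, Finset.mem_filter, Finset.mem_univ, true_and]
          constructor
          · rintro (h | h)
            · exact absurd h hpu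
            · refine Or.inr ⟨hu, ?_⟩
              by_contra hns
              exact h (hl.mpr (iff_of_false hps (fun hsu => hns (hru.mpr hsu))))
          · rintro (h | ⟨h1, h2⟩)
            · exact absurd h hu
            · exact Or.inr (fun hex => hps ((hl.mp hex).mpr (hru.mp h2)))
    have hBsum : B = 1 + ∑ v ∈ (if IsSquare ((p : ZMod q)) then DHQNR q else DHQR q),
        γ ^ v.val := by
      have step1 : (∑ u : ZMod q, (if hfun ((p : ZMod q) * u) then (1 : ZMod r) else 0) * γ ^ u.val)
          = ∑ u ∈ Finset.univ.filter (fun u : ZMod q => hfun ((p : ZMod q) * u)), γ ^ u.val := by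
        rw [Finset.sum_filter]
        exact Finset.sum_congr rfl (fun u _ => by split_ifs <;> simp)
      rw [hBu, step1, hfilter,
        Finset.sum_insert (by split_ifs <;> simp [DHQNR, DHQR]), ZMod.val_zero, pow_zero]
    have hq1 : (q : ZMod r) ≠ 1 := by
      intro h
      have hc : ((q - 1 : ℕ) : ZMod r) = 0 := by
        push_cast [Nat.cast_sub (show 1 ≤ q by omega)]
        linear_combination h
      have := Nat.le_of_dvd (by omega) ((ZMod.natCast_eq_zero_iff _ r).mp hc)
      omega
    have hqm1 : (q : ZMod r) ≠ -1 := by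
      intro h
      have hc : ((q + 1 : ℕ) : ZMod r) = 0 := by push_cast; linear_combination h
      have := Nat.le_of_dvd (by omega) ((ZMod.natCast_eq_zero_iff _ r).mp hc)
      omega
    have hg := gauss_eta_ne hqne2 hrne2 hγord hq1 hqm1
    rw [hBsum] at hB0
    by_cases hps : IsSquare ((p : ZMod q))
    · rw [if_pos hps] at hB0
      exact hg.2 hB0
    · rw [if_neg hps] at hB0
      exact hg.1 hB0
  -- dispatch
  obtain ⟨d1, d2, hd1, hd2, hdmul⟩ := Nat.dvd_mul.mp hddvd
  rcases hp.eq_one_or_self_of_dvd d1 hd1 with h1 | h1 <;>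
    rcases hq.eq_one_or_self_of_dvd d2 hd2 with h2 | h2
  · subst h1; subst h2; rw [one_mul] at hdmul; exact hdne1 hdmul.symm
  · subst h1; subst h2; rw [one_mul] at hdmul; exact case_q hdmul.symm
  · subst h1; subst h2; rw [mul_one] at hdmul; exact case_p hdmul.symm
  · subst h1; subst h2; exact case_pq hdmul.symm

end main


theorem stmt3 (p q g x : ℕ) (hp : Nat.Prime p) (hq : Nat.Prime q)
    (hpo : Odd p) (hqo : Odd q) (hpq : p < q)
    (hgcd : Nat.gcd (p - 1) (q - 1) = 2)
    (hgp : orderOf (g : ZMod p) = p - 1) (hgq : orderOf (g : ZMod q) = q - 1)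
    (hxp : (x : ZMod p) = (g : ZMod p)) (hxq : (x : ZMod q) = 1) (htwin : q = p + 2) :
    Nat.log 2 ((2 ^ (p * q) - 1) / Nat.gcd (2 ^ (p * q) - 1) (DHS2num2 p q g x)) =
      p * q - 1 := by
  haveI : Fact (Nat.Prime p) := ⟨hp⟩
  haveI : Fact (Nat.Prime q) := ⟨hq⟩
  have hN1 : 1 ≤ p * q := Nat.mul_pos hp.pos hq.pos
  have h2N : 1 ≤ 2 ^ (p * q) := Nat.one_le_two_pow
  have key : Nat.gcd (2 ^ (p * q) - 1) (DHS2num2 p q g x) = 1 := by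
    by_contra hne
    obtain ⟨r, hrp, hrd⟩ := Nat.exists_prime_and_dvd hne
    exact dh_main r hpo hqo hpq hgcd hgp hgq hxp hxq htwin hrp
      (hrd.trans (Nat.gcd_dvd_left _ _)) (hrd.trans (Nat.gcd_dvd_right _ _))
  rw [key, Nat.div_one]
  apply Nat.log_eq_of_pow_le_of_lt_pow
  · have h1 : 1 ≤ 2 ^ (p * q - 1) := Nat.one_le_two_pow
    have h2 : 2 ^ (p * q) = 2 * 2 ^ (p * q - 1) := by
      rw [← pow_succ']
      congr 1
      omega
    omega
  · have he : p * q - 1 + 1 = p * q := by omega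
    rw [he]
    omega
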